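/- Let Λ be a compact metric space, (b_i)_{i∈ℕ} and (c_i)_{i∈ℕ} sequences in Λ with dist(b_i, c_i) → 0 as i → ∞, and a : Λ → ℂ continuous. On the Hilbert space H = ℓ²(ℕ ⊕ ℕ, ℂ), let M_a be the bounded diagonal operator multiplying the coordinate indexed by inl i by a(b_i) and the coordinate indexed by inr i by a(c_i), and let F be the bounded operator that exchanges, for every i, the coordinates indexed by inl i and inr i. Then the commutator F ∘ M_a − M_a ∘ F is a compact operator on H. -/

import Mathlib

open Filter Topology
open scoped ENNReal

noncomputable def evalCLM (j : ℕ ⊕ ℕ) : lp (fun _ : ℕ ⊕ ℕ => ℂ) 2 →L[ℂ] ℂ :=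
  LinearMap.mkContinuous
    { toFun := fun v => v j
      map_add' := fun u v => by simp
      map_smul' := fun c v => by simp }
    1 (fun v => by rw [one_mul]; exact lp.norm_apply_le_norm (by norm_num) v j)

lemma evalCLM_apply (j : ℕ ⊕ ℕ) (v : lp (fun _ : ℕ ⊕ ℕ => ℂ) 2) :
    evalCLM j v = (v : ∀ _ : ℕ ⊕ ℕ, ℂ) j := rfl

lemma isCompactOperator_smulRight {H : Type*} [NormedAddCommGroup H] [NormedSpace ℂ H]
    (φ : H →L[ℂ] ℂ) (w : H) : IsCompactOperator (φ.smulRight w) := by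
  refine ⟨(fun c : ℂ => c • w) '' Metric.closedBall 0 1,
    (isCompact_closedBall 0 1).image (by continuity), ?_⟩
  have h : φ ⁻¹' Metric.closedBall 0 1 ∈ 𝓝 (0 : H) :=
    φ.continuous.continuousAt.preimage_mem_nhds (by simpa using Metric.closedBall_mem_nhds (0:ℂ) one_pos)
  exact Filter.mem_of_superset h (fun v hv => ⟨φ v, hv, rfl⟩)

lemma isCompactOperator_sum {ι H : Type*} [NormedAddCommGroup H] [NormedSpace ℂ H] (s : Finset ι)
    (f : ι → H →L[ℂ] H) (h : ∀ j ∈ s, IsCompactOperator (f j)) :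
    IsCompactOperator (∑ j ∈ s, f j) := by
  classical
  induction s using Finset.cons_induction with
  | empty => simpa using isCompactOperator_zero
  | cons j s hj ih =>
    rw [Finset.sum_cons]
    have := (h j (by simp)).add (ih fun k hk => h k (by simp [hk]))
    simpa using this

set_option maxHeartbeats 1000000 in
theorem cantor_commutator_compact {Λ : Type*} [MetricSpace Λ] [CompactSpace Λ]
    (b c : ℕ → Λ) (hbc : Tendsto (fun i => dist (b i) (c i)) atTop (𝓝 0))
    (a : C(Λ, ℂ))
    (Ma F : lp (fun _ : ℕ ⊕ ℕ => ℂ) 2 →L[ℂ] lp (fun _ : ℕ ⊕ ℕ => ℂ) 2)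
    (hMa : ∀ (v : lp (fun _ : ℕ ⊕ ℕ => ℂ) 2) (i : ℕ),
      (Ma v : ∀ _ : ℕ ⊕ ℕ, ℂ) (Sum.inl i) = a (b i) * (v : ∀ _ : ℕ ⊕ ℕ, ℂ) (Sum.inl i) ∧
      (Ma v : ∀ _ : ℕ ⊕ ℕ, ℂ) (Sum.inr i) = a (c i) * (v : ∀ _ : ℕ ⊕ ℕ, ℂ) (Sum.inr i))
    (hF : ∀ (v : lp (fun _ : ℕ ⊕ ℕ => ℂ) 2) (i : ℕ),
      (F v : ∀ _ : ℕ ⊕ ℕ, ℂ) (Sum.inl i) = (v : ∀ _ : ℕ ⊕ ℕ, ℂ) (Sum.inr i) ∧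
      (F v : ∀ _ : ℕ ⊕ ℕ, ℂ) (Sum.inr i) = (v : ∀ _ : ℕ ⊕ ℕ, ℂ) (Sum.inl i)) :
    IsCompactOperator (F.comp Ma - Ma.comp F) := by
  classical
  set H := lp (fun _ : ℕ ⊕ ℕ => ℂ) 2
  set d : ℕ ⊕ ℕ → ℂ :=
    Sum.elim (fun i => a (c i) - a (b i)) (fun i => a (b i) - a (c i)) with hd
  have hT : ∀ (v : H) (j : ℕ ⊕ ℕ),
      ((F.comp Ma - Ma.comp F) v : ∀ _ : ℕ ⊕ ℕ, ℂ) j = d j * (F v : ∀ _ : ℕ ⊕ ℕ, ℂ) j := by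
    intro v j
    have h1 : ((F.comp Ma - Ma.comp F) v : ∀ _ : ℕ ⊕ ℕ, ℂ) j
        = (F (Ma v) : ∀ _ : ℕ ⊕ ℕ, ℂ) j - (Ma (F v) : ∀ _ : ℕ ⊕ ℕ, ℂ) j := by
      rw [ContinuousLinearMap.sub_apply]
      simp [lp.coeFn_sub]
    cases j with
    | inl i =>
      rw [h1, (hF (Ma v) i).1, (hMa v i).2, (hMa (F v) i).1, (hF v i).1]
      simp only [hd, Sum.elim_inl]; ring
    | inr i =>
      rw [h1, (hF (Ma v) i).2, (hMa v i).1, (hMa (F v) i).2, (hF v i).2]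
      simp only [hd, Sum.elim_inr]; ring
  have hsmall : ∀ ε > (0:ℝ), ∃ N : ℕ, ∀ i ≥ N, ‖a (b i) - a (c i)‖ ≤ ε := by
    intro ε hε
    obtain ⟨δ, hδ, hδ'⟩ := Metric.uniformContinuous_iff.1
      (CompactSpace.uniformContinuous_of_continuous a.continuous) ε hε
    have h2 : ∀ᶠ i in atTop, dist (b i) (c i) < δ := by
      have := hbc.eventually (gt_mem_nhds hδ)
      simpa using this
    obtain ⟨N, hN⟩ := h2.exists_forall_of_atTop
    exact ⟨N, fun i hi => le_of_lt (by simpa [dist_eq_norm] using hδ' (hN i hi))⟩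
  have hdnorm : ∀ j : ℕ ⊕ ℕ, ‖d j‖ = ‖a (b (Sum.elim id id j)) - a (c (Sum.elim id id j))‖ := by
    rintro (i | i) <;> simp [hd, norm_sub_rev]
  set R : ℕ ⊕ ℕ → (H →L[ℂ] H) :=
    fun j => ((d j) • evalCLM j).smulRight (lp.single 2 j (1:ℂ)) with hR
  set s : ℕ → Finset (ℕ ⊕ ℕ) := fun N => (Finset.range N).disjSum (Finset.range N) with hs
  set T : ℕ → (H →L[ℂ] H) := fun N => (∑ j ∈ s N, R j).comp F with hTN
  have hscompat : ∀ (N : ℕ) (j : ℕ ⊕ ℕ), j ∈ s N ↔ Sum.elim id id j < N := by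
    rintro N (i | i) <;> simp [hs]
  have hTNval : ∀ (N : ℕ) (v : H) (k : ℕ ⊕ ℕ),
      (T N v : ∀ _ : ℕ ⊕ ℕ, ℂ) k
        = if k ∈ s N then d k * (F v : ∀ _ : ℕ ⊕ ℕ, ℂ) k else 0 := by
    intro N v k
    have h3 : (T N v : ∀ _ : ℕ ⊕ ℕ, ℂ) k = ∑ j ∈ s N, ((R j) (F v) : ∀ _ : ℕ ⊕ ℕ, ℂ) k := by
      rw [hTN]
      simp [ContinuousLinearMap.sum_apply, lp.coeFn_sum]
      exact Finset.sum_apply _ _ _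
    rw [h3]
    have hRval : ∀ j, ((R j) (F v) : ∀ _ : ℕ ⊕ ℕ, ℂ) k
        = if k = j then d j * (F v : ∀ _ : ℕ ⊕ ℕ, ℂ) j else 0 := by
      intro j
      have h4 : (R j) (F v) = lp.single 2 j (d j * (F v : ∀ _ : ℕ ⊕ ℕ, ℂ) j) := by
        rw [hR]
        simp only [ContinuousLinearMap.smulRight_apply, ContinuousLinearMap.smul_apply,
          evalCLM_apply, smul_eq_mul]
        rw [← lp.single_smul]
        simp only [smul_eq_mul]
        rw [mul_one, evalCLM_apply]
      rw [h4, lp.single_apply]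
      split_ifs with h5
      · subst h5; simp
      · simp [Pi.single_apply, h5]
    rw [Finset.sum_congr rfl (fun j _ => hRval j)]
    simp
  have hTNcompact : ∀ N, IsCompactOperator (T N) := by
    intro N
    have h2 : IsCompactOperator (⇑(∑ j ∈ s N, R j)) := by
      rw [ContinuousLinearMap.coe_sum']
      exact isCompactOperator_sum (s N) R (fun j _ => isCompactOperator_smulRight _ _)
    rw [hTN]
    exact h2.comp_clm F
  have htendsto : Tendsto T atTop (𝓝 (F.comp Ma - Ma.comp F)) := by
    rw [Metric.tendsto_atTop]
    intro ε hε
    set ε' : ℝ := ε / (2 * (‖F‖ + 1)) with hε'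
    have hF0 : (0:ℝ) < ‖F‖ + 1 := by positivity
    have hε'pos : 0 < ε' := by positivity
    obtain ⟨N₀, hN₀⟩ := hsmall ε' hε'pos
    refine ⟨N₀, fun N hN => ?_⟩
    rw [dist_eq_norm]
    have hbound : ‖T N - (F.comp Ma - Ma.comp F)‖ ≤ ε' * ‖F‖ := by
      refine ContinuousLinearMap.opNorm_le_bound _ (by positivity) (fun v => ?_)
      set u := F v with hu
      set w := (T N - (F.comp Ma - Ma.comp F)) v with hw
      have hwk : ∀ k, ‖(w : ∀ _ : ℕ ⊕ ℕ, ℂ) k‖ ≤ ε' * ‖(u : ∀ _ : ℕ ⊕ ℕ, ℂ) k‖ := by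
        intro k
        have hwval : (w : ∀ _ : ℕ ⊕ ℕ, ℂ) k
            = (if k ∈ s N then d k * (u : ∀ _ : ℕ ⊕ ℕ, ℂ) k else 0)
              - d k * (u : ∀ _ : ℕ ⊕ ℕ, ℂ) k := by
          rw [hw, ContinuousLinearMap.sub_apply, lp.coeFn_sub, Pi.sub_apply,
            hTNval N v k, hT v k]
        by_cases hk : k ∈ s N
        · rw [hwval, if_pos hk, sub_self, norm_zero]
          positivity
        · rw [hwval, if_neg hk, zero_sub, norm_neg, norm_mul]
          have h6 : ‖d k‖ ≤ ε' := by
            rw [hdnorm k]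
            exact hN₀ _ (le_trans hN (not_lt.1 (fun h => hk ((hscompat N k).2 h))))
          exact mul_le_mul_of_nonneg_right h6 (norm_nonneg _)
      have hnw : ‖w‖ ≤ ε' * ‖u‖ := by
        have hp : (0:ℝ) < (2 : ℝ≥0∞).toReal := by norm_num
        refine lp.norm_le_of_forall_sum_le hp (by positivity) (fun t => ?_)
        calc ∑ k ∈ t, ‖(w : ∀ _ : ℕ ⊕ ℕ, ℂ) k‖ ^ (2 : ℝ≥0∞).toReal
            ≤ ∑ k ∈ t, ε' ^ (2 : ℝ≥0∞).toReal * ‖(u : ∀ _ : ℕ ⊕ ℕ, ℂ) k‖ ^ (2 : ℝ≥0∞).toReal := by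
              refine Finset.sum_le_sum (fun k _ => ?_)
              rw [← Real.mul_rpow hε'pos.le (norm_nonneg _)]
              exact Real.rpow_le_rpow (norm_nonneg _) (hwk k) (by norm_num)
          _ = ε' ^ (2 : ℝ≥0∞).toReal * ∑ k ∈ t, ‖(u : ∀ _ : ℕ ⊕ ℕ, ℂ) k‖ ^ (2 : ℝ≥0∞).toReal := by
              rw [Finset.mul_sum]
          _ ≤ ε' ^ (2 : ℝ≥0∞).toReal * ‖u‖ ^ (2 : ℝ≥0∞).toReal := by
              refine mul_le_mul_of_nonneg_left (lp.sum_rpow_le_norm_rpow hp u t) ?_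
              positivity
          _ = (ε' * ‖u‖) ^ (2 : ℝ≥0∞).toReal := by
              rw [Real.mul_rpow hε'pos.le (norm_nonneg _)]
      calc ‖w‖ ≤ ε' * ‖u‖ := hnw
        _ ≤ ε' * (‖F‖ * ‖v‖) := mul_le_mul_of_nonneg_left (F.le_opNorm v) hε'pos.le
        _ = ε' * ‖F‖ * ‖v‖ := by ring
    calc ‖T N - (F.comp Ma - Ma.comp F)‖ ≤ ε' * ‖F‖ := hbound
      _ ≤ ε / 2 := by
          rw [hε', div_mul_eq_mul_div, div_le_div_iff₀ (by positivity) (by norm_num : (0:ℝ) < 2)]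
          nlinarith [norm_nonneg F, hε.le]
      _ < ε := by linarith
  exact isCompactOperator_of_tendsto htendsto (Eventually.of_forall hTNcompact)
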